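/- For any m ≥ 2 candidates at arbitrary distinct locations in a Euclidean space and any number n of voters, the Sequential Dictator mechanism is a strategy-proof deterministic two-winner scv mechanism. -/

import Mathlib

open Finset

/-- Cost of a point `z` when the pair of candidates `(y k, y l)` is elected:
the distance to the closer of the two winners. -/
noncomputable def pairCost {α : Type*} [PseudoMetricSpace α] {m : ℕ}
    (y : Fin m → α) (k l : Fin m) (z : α) : ℝ :=
  min (dist z (y k)) (dist z (y l))

/-- Social cost of the pair `(y k, y l)` on the location profile `x`. -/
noncomputable def socialCost {α : Type*} [PseudoMetricSpace α] {m n : ℕ}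
    (y : Fin m → α) (k l : Fin m) (x : Fin n → α) : ℝ :=
  ∑ i, pairCost y k l (x i)

/-- Optimal social cost over all pairs of distinct candidates. -/
noncomputable def OPT {α : Type*} [PseudoMetricSpace α] {m n : ℕ}
    (y : Fin m → α) (x : Fin n → α) : ℝ :=
  sInf {c : ℝ | ∃ k l : Fin m, k ≠ l ∧ c = socialCost y k l x}

/-- A location profile `x` is consistent with an action profile `a` if every
voter votes for (one of) her nearest candidate(s). -/
def Consistent {α : Type*} [PseudoMetricSpace α] {m n : ℕ}
    (y : Fin m → α) (a : Fin n → Fin m) (x : Fin n → α) : Prop :=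
  ∀ (i : Fin n) (k : Fin m), dist (x i) (y (a i)) ≤ dist (x i) (y k)

/-- Strategy-proofness of a deterministic two-winner mechanism. -/
def DetSP {α : Type*} [PseudoMetricSpace α] {m n : ℕ}
    (y : Fin m → α) (f : (Fin n → Fin m) → Fin m × Fin m) : Prop :=
  ∀ (i : Fin n) (xi : α) (a : Fin n → Fin m) (astar ai' : Fin m),
    (∀ k, dist xi (y astar) ≤ dist xi (y k)) →
    pairCost y (f (Function.update a i astar)).1 (f (Function.update a i astar)).2 xi ≤
      pairCost y (f (Function.update a i ai')).1 (f (Function.update a i ai')).2 xi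

/-- The Sequential Dictator mechanism: output `(a 0, a j)` where `j` is the
smallest index with `a j ≠ a 0`; if all voters vote for the same candidate `i`,
output `(0, i)` when `i ≠ 0` and `(0, 1)` when `i = 0`. -/
def seqDict {n m : ℕ} (hn : 0 < n) (hm : 2 ≤ m) (a : Fin n → Fin m) :
    Fin m × Fin m :=
  if h : (univ.filter (fun j => a j ≠ a ⟨0, hn⟩)).Nonempty then
    (a ⟨0, hn⟩, a ((univ.filter (fun j => a j ≠ a ⟨0, hn⟩)).min' h))
  else if a ⟨0, hn⟩ = ⟨0, by omega⟩ then (⟨0, by omega⟩, ⟨1, by omega⟩)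
  else (⟨0, by omega⟩, a ⟨0, hn⟩)

/-- For any `m ≥ 2` candidates at distinct locations in a Euclidean space, the
Sequential Dictator mechanism is a strategy-proof deterministic two-winner scv
mechanism. -/
lemma seqDict_key {n m : ℕ} (hn : 0 < n) (hm : 2 ≤ m) (a : Fin n → Fin m)
    (i : Fin n) (astar ai' : Fin m) :
    seqDict hn hm (Function.update a i astar) = seqDict hn hm (Function.update a i ai') ∨
    (seqDict hn hm (Function.update a i astar)).1 = astar ∨
    (seqDict hn hm (Function.update a i astar)).2 = astar := by
  set z : Fin n := ⟨0, hn⟩ with hz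
  by_cases hiz : i = z
  · subst hiz
    right
    unfold seqDict
    split_ifs with h1 h2
    · left; simp [hz]
    · left
      simp only [hz, Function.update_self] at h2
      simp [h2]
    · right
      simp [hz]
  · -- i ≠ z
    have hupz : ∀ v : Fin m, Function.update a i v z = a z := fun v =>
      Function.update_of_ne (Ne.symm hiz) v a
    by_cases hstar : astar = a z
    · right
      unfold seqDict
      split_ifs with h1 h2
      · left; simp [hupz, hstar]; exact hupz _
      · left
        rw [hupz] at h2
        simp [hstar, h2]
      · right; simp [hupz, hstar]; exact hupz _
    · -- astar ≠ a z
      have hmem : i ∈ univ.filter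
          (fun j => Function.update a i astar j ≠ Function.update a i astar z) := by
        simp [Function.update_self, hupz, hstar]
      have h1 : (univ.filter
          (fun j => Function.update a i astar j ≠ Function.update a i astar z)).Nonempty :=
        ⟨i, hmem⟩
      set j0 := (univ.filter
          (fun j => Function.update a i astar j ≠ Function.update a i astar z)).min' h1 with hj0
      by_cases hji : j0 = i
      · right; right
        unfold seqDict
        rw [dif_pos h1]
        show Function.update a i astar j0 = astar
        rw [hji, Function.update_self]
      · -- j0 ≠ i : outputs equal
        left
        have hj0mem := Finset.min'_mem _ h1
        rw [← hj0] at hj0mem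
        have haj0 : a j0 ≠ a z := by
          have := (Finset.mem_filter.1 hj0mem).2
          rwa [Function.update_of_ne hji, hupz] at this
        have hmem' : j0 ∈ univ.filter
            (fun j => Function.update a i ai' j ≠ Function.update a i ai' z) := by
          simp [Function.update_of_ne hji, hupz, haj0]
        have h1' : (univ.filter
            (fun j => Function.update a i ai' j ≠ Function.update a i ai' z)).Nonempty :=
          ⟨j0, hmem'⟩
        have hminle : j0 ≤ i := by
          rw [hj0]; exact Finset.min'_le _ _ hmem
        have hmin' : (univ.filter
            (fun j => Function.update a i ai' j ≠ Function.update a i ai' z)).min' h1' = j0 := by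
          apply le_antisymm
          · exact Finset.min'_le _ _ hmem'
          · apply Finset.le_min'
            intro j hj
            by_cases hji' : j = i
            · exact hji' ▸ hminle
            · have := (Finset.mem_filter.1 hj).2
              rw [Function.update_of_ne hji', hupz] at this
              apply Finset.min'_le
              simp [Function.update_of_ne hji', hupz, this]
        unfold seqDict
        rw [dif_pos h1, dif_pos h1']
        rw [hmin', ← hj0]
        rw [hupz, hupz, Function.update_of_ne hji, Function.update_of_ne hji]


theorem stmt14 {dim m n : ℕ} (hm : 2 ≤ m) (hn : 0 < n)
    (y : Fin m → EuclideanSpace ℝ (Fin dim)) (hy : Function.Injective y) :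
    (∀ a : Fin n → Fin m, (seqDict hn hm a).1 ≠ (seqDict hn hm a).2) ∧
      DetSP y (seqDict hn hm) := by
  constructor
  · intro a
    unfold seqDict
    split_ifs with h1 h2
    · intro he
      exact (Finset.mem_filter.1 (Finset.min'_mem _ h1)).2 he.symm
    · intro he
      exact absurd (congrArg Fin.val he) (by simp)
    · intro he
      exact h2 he.symm
  · intro i xi a astar ai' hnear
    rcases seqDict_key hn hm a i astar ai' with heq | h | h
    · rw [heq]
    · calc pairCost y (seqDict hn hm (Function.update a i astar)).1
            (seqDict hn hm (Function.update a i astar)).2 xi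
          ≤ dist xi (y astar) := by rw [pairCost, h]; exact min_le_left _ _
        _ ≤ _ := le_min (hnear _) (hnear _)
    · calc pairCost y (seqDict hn hm (Function.update a i astar)).1
            (seqDict hn hm (Function.update a i astar)).2 xi
          ≤ dist xi (y astar) := by rw [pairCost, h]; exact min_le_right _ _
        _ ≤ _ := le_min (hnear _) (hnear _)
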